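/- arXiv:1804.02416 — 2 statements merged into one kernel-verified Lean document; each statement's English description precedes it below -/
import Mathlib

section
/- Let H be a Hopf algebra over a field k with comultiplication Δ, counit ε and antipode S, and let C ⊆ H be a commutative Hopf subalgebra contained in the center of H (i.e. C is a subalgebra with Δ(C) ⊆ C⊗C, S(C) ⊆ C, and every element of C commutes with every element of H). For an algebra homomorphism g : C → k, let I_g denote the ideal of H generated by {z − g(z)·1 : z ∈ C}. If g₁, g₂ : C → k are algebra homomorphisms and g : C → k is their convolution product, g(z) = (g₁ ⊗ g₂)(Δ(z)), then Δ(I_g) ⊆ I_{g₁} ⊗ H + H ⊗ I_{g₂}, where I_{g₁} ⊗ H and H ⊗ I_{g₂} are viewed as subspaces of H ⊗ H. -/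
open scoped TensorProduct

/-- The ideal `I_g` of `H` generated by the elements `z - g(z)·1` for `z ∈ C`, where `C` is
embedded in `H` via `ι`.  (Since the image of `ι` is assumed central in `H`, the left ideal
span coincides with the two-sided ideal generated by these elements.) -/
def charIdeal {k C H : Type} [CommSemiring k] [CommRing C] [Ring H] [Algebra k C] [Algebra k H]
    (ι : C →ₐ[k] H) (g : C → k) : Ideal H :=
  Ideal.span (Set.range fun z : C => ι z - algebraMap k H (g z))

lemma mul_mem_range_left {k H : Type} [CommSemiring k] [Ring H] [Algebra k H]
    (I : Ideal H) (w : H ⊗[k] H) {u : H ⊗[k] H}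
    (hu : u ∈ LinearMap.range (TensorProduct.map
        (Submodule.restrictScalars k I).subtype (LinearMap.id : H →ₗ[k] H))) :
    w * u ∈ LinearMap.range (TensorProduct.map
        (Submodule.restrictScalars k I).subtype (LinearMap.id : H →ₗ[k] H)) := by
  rw [TensorProduct.range_map_eq_span_tmul] at hu ⊢
  induction hu using Submodule.span_induction with
  | mem x hx =>
    obtain ⟨m, n, rfl⟩ := hx
    induction w using TensorProduct.induction_on with
    | zero => simpa using Submodule.zero_mem _
    | tmul c d =>
      show (c ⊗ₜ[k] d) * ((m : H) ⊗ₜ[k] (LinearMap.id n)) ∈ _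
      rw [Algebra.TensorProduct.tmul_mul_tmul]
      exact Submodule.subset_span ⟨⟨c * m, I.mul_mem_left c m.2⟩, d * n, rfl⟩
    | add w₁ w₂ h₁ h₂ => rw [add_mul]; exact Submodule.add_mem _ h₁ h₂
  | zero => simpa using Submodule.zero_mem _
  | add x y _ _ hx hy => rw [mul_add]; exact Submodule.add_mem _ hx hy
  | smul c x _ hx => rw [mul_smul_comm]; exact Submodule.smul_mem _ c hx

lemma mul_mem_range_right {k H : Type} [CommSemiring k] [Ring H] [Algebra k H]
    (I : Ideal H) (w : H ⊗[k] H) {u : H ⊗[k] H}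
    (hu : u ∈ LinearMap.range (TensorProduct.map (LinearMap.id : H →ₗ[k] H)
        (Submodule.restrictScalars k I).subtype)) :
    w * u ∈ LinearMap.range (TensorProduct.map (LinearMap.id : H →ₗ[k] H)
        (Submodule.restrictScalars k I).subtype) := by
  rw [TensorProduct.range_map_eq_span_tmul] at hu ⊢
  induction hu using Submodule.span_induction with
  | mem x hx =>
    obtain ⟨m, n, rfl⟩ := hx
    induction w using TensorProduct.induction_on with
    | zero => simpa using Submodule.zero_mem _
    | tmul c d =>
      show (c ⊗ₜ[k] d) * ((LinearMap.id m) ⊗ₜ[k] (n : H)) ∈ _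
      rw [Algebra.TensorProduct.tmul_mul_tmul]
      exact Submodule.subset_span ⟨c * m, ⟨d * n, I.mul_mem_left d n.2⟩, rfl⟩
    | add w₁ w₂ h₁ h₂ => rw [add_mul]; exact Submodule.add_mem _ h₁ h₂
  | zero => simpa using Submodule.zero_mem _
  | add x y _ _ hx hy => rw [mul_add]; exact Submodule.add_mem _ hx hy
  | smul c x _ hx => rw [mul_smul_comm]; exact Submodule.smul_mem _ c hx

lemma mul_mem_sup {k H : Type} [CommSemiring k] [Ring H] [Algebra k H]
    (I₁ I₂ : Ideal H) (w : H ⊗[k] H) {u : H ⊗[k] H}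
    (hu : u ∈ LinearMap.range (TensorProduct.map
          (Submodule.restrictScalars k I₁).subtype (LinearMap.id : H →ₗ[k] H))
      ⊔ LinearMap.range (TensorProduct.map (LinearMap.id : H →ₗ[k] H)
          (Submodule.restrictScalars k I₂).subtype)) :
    w * u ∈ LinearMap.range (TensorProduct.map
          (Submodule.restrictScalars k I₁).subtype (LinearMap.id : H →ₗ[k] H))
      ⊔ LinearMap.range (TensorProduct.map (LinearMap.id : H →ₗ[k] H)
          (Submodule.restrictScalars k I₂).subtype) := by
  obtain ⟨u₁, h₁, u₂, h₂, rfl⟩ := Submodule.mem_sup.mp hu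
  rw [mul_add]
  exact add_mem (Submodule.mem_sup_left (mul_mem_range_left I₁ w h₁))
    (Submodule.mem_sup_right (mul_mem_range_right I₂ w h₂))

/-- If `g` is the convolution product of the algebra homomorphisms `g₁, g₂ : C → k`, then
`Δ(I_g) ⊆ I_{g₁} ⊗ H + H ⊗ I_{g₂}`. -/
theorem comul_charIdeal_mem (k C H : Type) [Field k]
    [CommRing C] [HopfAlgebra k C] [Ring H] [HopfAlgebra k H]
    (ι : C →ₐ[k] H) (hinj : Function.Injective ι)
    (hcomul : ∀ z : C, Coalgebra.comul (R := k) (ι z)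
      = TensorProduct.map ι.toLinearMap ι.toLinearMap (Coalgebra.comul (R := k) z))
    (hcounit : ∀ z : C, Coalgebra.counit (R := k) (ι z) = Coalgebra.counit (R := k) z)
    (hantipode : ∀ z : C, HopfAlgebra.antipode (R := k) (ι z)
      = ι (HopfAlgebra.antipode (R := k) z))
    (hcentral : ∀ (z : C) (h : H), ι z * h = h * ι z)
    (g₁ g₂ g : C →ₐ[k] k)
    (hg : ∀ z : C, g z
      = LinearMap.mul' k k
          (TensorProduct.map g₁.toLinearMap g₂.toLinearMap (Coalgebra.comul (R := k) z))) :
    ∀ x ∈ charIdeal ι (g : C → k), Coalgebra.comul (R := k) x ∈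
      LinearMap.range (TensorProduct.map
          (Submodule.restrictScalars k (charIdeal ι (g₁ : C → k))).subtype
          (LinearMap.id : H →ₗ[k] H))
      ⊔ LinearMap.range (TensorProduct.map (LinearMap.id : H →ₗ[k] H)
          (Submodule.restrictScalars k (charIdeal ι (g₂ : C → k))).subtype) := by
  intro x hx
  induction hx using Submodule.span_induction with
  | mem x hx =>
    obtain ⟨z, rfl⟩ := hx
    rw [map_sub, hcomul z]
    have h1 : Coalgebra.comul (R := k) (algebraMap k H (g z))
        = (g z) • ((1 : H) ⊗ₜ[k] (1 : H)) := by
      rw [Algebra.algebraMap_eq_smul_one, map_smul, Bialgebra.comul_one,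
        Algebra.TensorProduct.one_def]
    rw [h1, hg z]
    generalize Coalgebra.comul (R := k) z = t
    induction t using TensorProduct.induction_on with
    | zero => simpa using Submodule.zero_mem _
    | tmul a b =>
      have key : TensorProduct.map ι.toLinearMap ι.toLinearMap (a ⊗ₜ[k] b)
          - (LinearMap.mul' k k
              (TensorProduct.map g₁.toLinearMap g₂.toLinearMap (a ⊗ₜ[k] b)))
            • ((1:H) ⊗ₜ[k] (1:H))
          = (ι a - algebraMap k H (g₁ a)) ⊗ₜ[k] (ι b)
            + (algebraMap k H (g₁ a)) ⊗ₜ[k] (ι b - algebraMap k H (g₂ b)) := by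
        simp only [TensorProduct.map_tmul, LinearMap.mul'_apply,
          AlgHom.toLinearMap_apply, Algebra.algebraMap_eq_smul_one,
          TensorProduct.sub_tmul, TensorProduct.tmul_sub,
          TensorProduct.smul_tmul', TensorProduct.tmul_smul, smul_smul,
          mul_comm (g₂ b) (g₁ a)]
        abel
      rw [key]
      refine add_mem (Submodule.mem_sup_left ?_) (Submodule.mem_sup_right ?_)
      · exact ⟨(⟨ι a - algebraMap k H (g₁ a),
          Submodule.subset_span ⟨a, rfl⟩⟩ : Submodule.restrictScalars k
            (charIdeal ι (g₁ : C → k))) ⊗ₜ[k] (ι b), rfl⟩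
      · exact ⟨(algebraMap k H (g₁ a)) ⊗ₜ[k]
          (⟨ι b - algebraMap k H (g₂ b), Submodule.subset_span ⟨b, rfl⟩⟩ :
            Submodule.restrictScalars k (charIdeal ι (g₂ : C → k))), rfl⟩
    | add t₁ t₂ h₁ h₂ =>
      rw [map_add, map_add, map_add, add_smul]
      have : TensorProduct.map ι.toLinearMap ι.toLinearMap t₁
          + TensorProduct.map ι.toLinearMap ι.toLinearMap t₂
          - ((LinearMap.mul' k k (TensorProduct.map g₁.toLinearMap g₂.toLinearMap t₁))
              • ((1:H) ⊗ₜ[k] (1:H))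
            + (LinearMap.mul' k k (TensorProduct.map g₁.toLinearMap g₂.toLinearMap t₂))
              • ((1:H) ⊗ₜ[k] (1:H)))
          = (TensorProduct.map ι.toLinearMap ι.toLinearMap t₁
              - (LinearMap.mul' k k (TensorProduct.map g₁.toLinearMap g₂.toLinearMap t₁))
                • ((1:H) ⊗ₜ[k] (1:H)))
            + (TensorProduct.map ι.toLinearMap ι.toLinearMap t₂
              - (LinearMap.mul' k k (TensorProduct.map g₁.toLinearMap g₂.toLinearMap t₂))
                • ((1:H) ⊗ₜ[k] (1:H))) := by abel
      rw [this]
      exact add_mem h₁ h₂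
  | zero => simpa using Submodule.zero_mem _
  | add x y _ _ hx hy => rw [map_add]; exact add_mem hx hy
  | smul h x _ hx =>
    have : Coalgebra.comul (R := k) (h • x)
        = Coalgebra.comul (R := k) h * Coalgebra.comul (R := k) x := by
      rw [smul_eq_mul]
      simpa using map_mul (Bialgebra.comulAlgHom k H) h x
    rw [this]
    exact mul_mem_sup _ _ _ hx
end

section
/- Let H be a finite type Hopf G-coalgebra over a field k in which every antipode map S_α : H_α → H_{α⁻¹} is bijective, let μ be a right G-integral for H, and let a = (a_α)_{α∈G} be a G-comodulus for μ. Then for every α ∈ G and every x ∈ H_α one has μ_{α⁻¹}(S_α(x)) = μ_α(a_α x). -/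
open scoped TensorProduct

/-- Transport along an equality of indices, as an algebra isomorphism. -/
def castAlg (k : Type) [CommSemiring k] {G : Type} {H : G → Type}
    [∀ γ : G, Ring (H γ)] [∀ γ : G, Algebra k (H γ)]
    {γ γ' : G} (h : γ = γ') : H γ ≃ₐ[k] H γ' := by
  subst h; exact AlgEquiv.refl

/-- A Hopf `G`-coalgebra over a field `k`. -/
structure HopfGCoalgebra (k G : Type) [Field k] [Group G] (H : G → Type)
    [∀ γ : G, Ring (H γ)] [∀ γ : G, Algebra k (H γ)] where
  Δ : ∀ α β : G, H (α * β) →ₐ[k] (H α ⊗[k] H β)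
  ε : H (1 : G) →ₐ[k] k
  S : ∀ γ : G, H γ →ₗ[k] H γ⁻¹
  coassoc : ∀ (α β γ : G) (x : H (α * β * γ)),
    (TensorProduct.map (Δ α β).toLinearMap LinearMap.id) (Δ (α * β) γ x)
      = (TensorProduct.assoc k (H α) (H β) (H γ)).symm
          ((TensorProduct.map LinearMap.id (Δ β γ).toLinearMap)
            (Δ α (β * γ) (castAlg k (mul_assoc α β γ) x)))
  counit_right : ∀ (α : G) (x : H (α * 1)),
    (TensorProduct.rid k (H α)) ((TensorProduct.map LinearMap.id ε.toLinearMap) (Δ α 1 x))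
      = castAlg k (mul_one α) x
  counit_left : ∀ (α : G) (x : H (1 * α)),
    (TensorProduct.lid k (H α)) ((TensorProduct.map ε.toLinearMap LinearMap.id) (Δ 1 α x))
      = castAlg k (one_mul α) x
  antipode_left : ∀ (α : G) (x : H (α⁻¹ * α)),
    (LinearMap.mul' k (H α))
      ((TensorProduct.map ((castAlg k (inv_inv α)).toLinearMap ∘ₗ S α⁻¹) LinearMap.id)
        (Δ α⁻¹ α x))
      = ε (castAlg k (inv_mul_cancel α) x) • 1
  antipode_right : ∀ (α : G) (x : H (α * α⁻¹)),
    (LinearMap.mul' k (H α))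
      ((TensorProduct.map LinearMap.id ((castAlg k (inv_inv α)).toLinearMap ∘ₗ S α⁻¹))
        (Δ α α⁻¹ x))
      = ε (castAlg k (mul_inv_cancel α) x) • 1

namespace HopfGCoalgebra

variable {k G : Type} [Field k] [Group G] {H : G → Type}
  [∀ γ : G, Ring (H γ)] [∀ γ : G, Algebra k (H γ)]

/-- A family of linear forms is a right `G`-integral. -/
def IsRightIntegral (D : HopfGCoalgebra k G H) (μ : ∀ γ : G, H γ →ₗ[k] k) : Prop :=
  ∀ (α β : G) (x : H (α * β)),
    (TensorProduct.lid k (H β)) ((TensorProduct.map (μ α) LinearMap.id) (D.Δ α β x))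
      = μ (α * β) x • 1

/-- A family of linear forms is a left `G`-integral. -/
def IsLeftIntegral (D : HopfGCoalgebra k G H) (μ : ∀ γ : G, H γ →ₗ[k] k) : Prop :=
  ∀ (α β : G) (x : H (α * β)),
    (TensorProduct.rid k (H α)) ((TensorProduct.map LinearMap.id (μ β)) (D.Δ α β x))
      = μ (α * β) x • 1

/-- A family of invertible elements is a pivot. -/
structure IsPivot (D : HopfGCoalgebra k G H) (g : ∀ γ : G, (H γ)ˣ) : Prop where
  delta : ∀ α β : G, D.Δ α β (g (α * β) : H (α * β)) = (g α : H α) ⊗ₜ[k] (g β : H β)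
  counit : D.ε (g 1 : H 1) = 1
  antipode : ∀ (α : G) (x : H α),
    castAlg k (inv_inv α) (D.S α⁻¹ (D.S α x)) = (g α : H α) * x * ((g α)⁻¹ : (H α)ˣ)

/-- `H` is unimodular if `H₁` admits a nonzero two-sided cointegral. -/
def IsUnimodular (D : HopfGCoalgebra k G H) : Prop :=
  ∃ Λ : H 1, Λ ≠ 0 ∧ ∀ h : H 1, h * Λ = D.ε h • Λ ∧ Λ * h = D.ε h • Λ

/-- A `G`-comodulus for a right `G`-integral `μ`. -/
structure IsComodulus (D : HopfGCoalgebra k G H) (μ : ∀ γ : G, H γ →ₗ[k] k)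
    (a : ∀ γ : G, (H γ)ˣ) : Prop where
  delta : ∀ α β : G, D.Δ α β (a (α * β) : H (α * β)) = (a α : H α) ⊗ₜ[k] (a β : H β)
  counit : D.ε (a 1 : H 1) = 1
  rel : ∀ (α β : G) (x : H (α * β)),
    (TensorProduct.rid k (H α)) ((TensorProduct.map LinearMap.id (μ β)) (D.Δ α β x))
      = μ (α * β) x • (a α : H α)

end HopfGCoalgebra


section Tools

open TensorProduct

variable {k G : Type} [Field k] [Group G] {H : G → Type}
  [∀ γ : G, Ring (H γ)] [∀ γ : G, Algebra k (H γ)]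

@[simp] theorem castAlg_rfl_apply {γ : G} (x : H γ) : castAlg k (rfl : γ = γ) x = x := rfl

@[simp] theorem castAlg_rfl_toLinearMap {γ : G} :
    (castAlg (H := H) k (rfl : γ = γ)).toLinearMap = LinearMap.id := rfl

theorem castAlg_castAlg {γ γ' γ'' : G} (h : γ = γ') (h' : γ' = γ'') (x : H γ) :
    castAlg k h' (castAlg k h x) = castAlg k (h.trans h') x := by subst h; subst h'; rfl

theorem castAlg_injective {γ γ' : G} (h : γ = γ') : Function.Injective (castAlg (H := H) k h) :=
  (castAlg k h).injective

namespace HopfGCoalgebra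

variable (D : HopfGCoalgebra k G H)

theorem S_cast {γ γ' : G} (h : γ = γ') (x : H γ) :
    D.S γ' (castAlg k h x) = castAlg k (congrArg Inv.inv h) (D.S γ x) := by subst h; rfl

theorem mu_cast (μ : ∀ γ : G, H γ →ₗ[k] k) {γ γ' : G} (h : γ = γ') (x : H γ) :
    μ γ' (castAlg k h x) = μ γ x := by subst h; rfl

theorem Δ_cast_left {α α' : G} (β : G) (h : α = α') (x : H (α * β)) :
    D.Δ α' β (castAlg k (congrArg (· * β) h) x)
      = (TensorProduct.map (castAlg k h).toLinearMap LinearMap.id) (D.Δ α β x) := by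
  subst h; simp

theorem Δ_cast_right (α : G) {β β' : G} (h : β = β') (x : H (α * β)) :
    D.Δ α β' (castAlg k (congrArg (α * ·) h) x)
      = (TensorProduct.map LinearMap.id (castAlg k h).toLinearMap) (D.Δ α β x) := by
  subst h; simp

end HopfGCoalgebra

end Tools

namespace HopfGCoalgebra

section Defs

open TensorProduct

variable {k G : Type} [Field k] [Group G] {H : G → Type}
  [∀ γ : G, Ring (H γ)] [∀ γ : G, Algebra k (H γ)]

variable (D : HopfGCoalgebra k G H)

/-- `Δ_{α,1}` precomposed with the cast `H α ≃ H (α*1)`. -/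
noncomputable def DR (α : G) : H α →ₗ[k] H α ⊗[k] H 1 :=
  (D.Δ α 1).toLinearMap ∘ₗ (castAlg k (mul_one α).symm).toLinearMap

noncomputable def DL (α : G) : H α →ₗ[k] H 1 ⊗[k] H α :=
  (D.Δ 1 α).toLinearMap ∘ₗ (castAlg k (one_mul α).symm).toLinearMap

noncomputable def D1 (α : G) : H 1 →ₗ[k] H α ⊗[k] H α⁻¹ :=
  (D.Δ α α⁻¹).toLinearMap ∘ₗ (castAlg k (mul_inv_cancel α).symm).toLinearMap

noncomputable def Dm (α : G) : H 1 →ₗ[k] H α⁻¹ ⊗[k] H α :=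
  (D.Δ α⁻¹ α).toLinearMap ∘ₗ (castAlg k (inv_mul_cancel α).symm).toLinearMap

theorem D1_mul (α : G) (u v : H 1) : D.D1 α (u * v) = D.D1 α u * D.D1 α v := by
  simp [D1, map_mul]

/-- Clean counit (right). -/
theorem counit_DR (α : G) (y : H α) :
    (TensorProduct.rid k (H α)) ((TensorProduct.map LinearMap.id D.ε.toLinearMap) (D.DR α y)) = y := by
  have h := D.counit_right α (castAlg k (mul_one α).symm y)
  simp only [DR, LinearMap.coe_comp, Function.comp_apply, AlgEquiv.toLinearMap_apply,
    AlgHom.toLinearMap_apply]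
  rw [h, castAlg_castAlg]
  exact castAlg_rfl_apply y

/-- Clean counit (left). -/
theorem counit_DL (α : G) (y : H α) :
    (TensorProduct.lid k (H α)) ((TensorProduct.map D.ε.toLinearMap LinearMap.id) (D.DL α y)) = y := by
  have h := D.counit_left α (castAlg k (one_mul α).symm y)
  simp only [DL, LinearMap.coe_comp, Function.comp_apply, AlgEquiv.toLinearMap_apply,
    AlgHom.toLinearMap_apply]
  rw [h, castAlg_castAlg]
  exact castAlg_rfl_apply y

end Defs

end HopfGCoalgebra

namespace HopfGCoalgebra

section Clean

open TensorProduct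

variable {k G : Type} [Field k] [Group G] {H : G → Type}
  [∀ γ : G, Ring (H γ)] [∀ γ : G, Algebra k (H γ)]

variable (D : HopfGCoalgebra k G H)

theorem mapid_mapid {R : Type} [CommSemiring R] {N M₁ M₂ M₃ : Type} [AddCommMonoid N]
    [AddCommMonoid M₁] [AddCommMonoid M₂] [AddCommMonoid M₃] [Module R N] [Module R M₁]
    [Module R M₂] [Module R M₃] (f : M₂ →ₗ[R] M₃) (g : M₁ →ₗ[R] M₂) (t : N ⊗[R] M₁) :
    TensorProduct.map LinearMap.id f (TensorProduct.map LinearMap.id g t)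
      = TensorProduct.map LinearMap.id (f ∘ₗ g) t := by
  induction t using TensorProduct.induction_on with
  | zero => simp
  | tmul u v => simp
  | add s t hs ht => simp [map_add, hs, ht]

theorem mapmap_id {R : Type} [CommSemiring R] {N M₁ M₂ M₃ : Type} [AddCommMonoid N]
    [AddCommMonoid M₁] [AddCommMonoid M₂] [AddCommMonoid M₃] [Module R N] [Module R M₁]
    [Module R M₂] [Module R M₃] (f : M₂ →ₗ[R] M₃) (g : M₁ →ₗ[R] M₂) (t : M₁ ⊗[R] N) :
    TensorProduct.map f LinearMap.id (TensorProduct.map g LinearMap.id t)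
      = TensorProduct.map (f ∘ₗ g) LinearMap.id t := by
  induction t using TensorProduct.induction_on with
  | zero => simp
  | tmul u v => simp
  | add s t hs ht => simp [map_add, hs, ht]

theorem integral_D1 {μ : ∀ γ : G, H γ →ₗ[k] k} (hμ : D.IsRightIntegral μ) (α : G) (z : H 1) :
    (TensorProduct.lid k (H α⁻¹)) ((TensorProduct.map (μ α) LinearMap.id) (D.D1 α z))
      = μ 1 z • (1 : H α⁻¹) := by
  have h := hμ α α⁻¹ (castAlg k (mul_inv_cancel α).symm z)
  simp only [D1, LinearMap.coe_comp, Function.comp_apply, AlgEquiv.toLinearMap_apply,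
    AlgHom.toLinearMap_apply]
  rw [h, mu_cast μ (mul_inv_cancel α).symm]

theorem comodulus_D1 {μ : ∀ γ : G, H γ →ₗ[k] k} {a : ∀ γ : G, (H γ)ˣ}
    (ha : D.IsComodulus μ a) (α : G) (z : H 1) :
    (TensorProduct.rid k (H α)) ((TensorProduct.map LinearMap.id (μ α⁻¹)) (D.D1 α z))
      = μ 1 z • (a α : H α) := by
  have h := ha.rel α α⁻¹ (castAlg k (mul_inv_cancel α).symm z)
  simp only [D1, LinearMap.coe_comp, Function.comp_apply, AlgEquiv.toLinearMap_apply,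
    AlgHom.toLinearMap_apply]
  rw [h, mu_cast μ (mul_inv_cancel α).symm]

theorem antiR (α : G) (u : H 1) :
    (LinearMap.mul' k (H α⁻¹)) ((TensorProduct.map LinearMap.id (D.S α)) (D.Dm α u))
      = D.ε u • 1 := by
  have hinv : α⁻¹⁻¹ = α := inv_inv α
  have A := D.antipode_right α⁻¹ (castAlg k (mul_inv_cancel α⁻¹).symm u)
  rw [castAlg_castAlg, castAlg_rfl_apply] at A
  have hS : (D.S α) ∘ₗ (castAlg k hinv).toLinearMap
      = (castAlg k (inv_inv α⁻¹)).toLinearMap ∘ₗ D.S α⁻¹⁻¹ := by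
    apply LinearMap.ext
    intro w
    simpa using D.S_cast hinv w
  have hcast : castAlg k (inv_mul_cancel α).symm u
      = castAlg k (congrArg (α⁻¹ * ·) hinv) (castAlg k (mul_inv_cancel α⁻¹).symm u) := by
    rw [castAlg_castAlg]
  simp only [Dm, LinearMap.coe_comp, Function.comp_apply, AlgEquiv.toLinearMap_apply,
    AlgHom.toLinearMap_apply]
  rw [hcast, D.Δ_cast_right α⁻¹ hinv, mapid_mapid, hS, A]

theorem coA (α : G) (y : H α) :
    (TensorProduct.map (D.D1 α) LinearMap.id) (D.DL α y)
      = (TensorProduct.assoc k (H α) (H α⁻¹) (H α)).symm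
          ((TensorProduct.map LinearMap.id (D.Dm α)) (D.DR α y)) := by
  have pf : α = α * α⁻¹ * α := by rw [mul_inv_cancel, one_mul]
  have h1 : (1 : G) = α * α⁻¹ := (mul_inv_cancel α).symm
  have h2 : (1 : G) = α⁻¹ * α := (inv_mul_cancel α).symm
  have C := D.coassoc α α⁻¹ α (castAlg k pf y)
  have hx1 : castAlg k pf y
      = castAlg k (congrArg (· * α) h1) (castAlg k (one_mul α).symm y) := by
    rw [castAlg_castAlg]
  have hx2 : castAlg k (mul_assoc α α⁻¹ α) (castAlg k pf y)
      = castAlg k (congrArg (α * ·) h2) (castAlg k (mul_one α).symm y) := by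
    rw [castAlg_castAlg, castAlg_castAlg]
  rw [hx2] at C
  rw [hx1] at C
  rw [D.Δ_cast_left α h1, D.Δ_cast_right α h2] at C
  rw [mapmap_id, mapid_mapid] at C
  simp only [DL, DR, D1, Dm, LinearMap.coe_comp, Function.comp_apply,
    AlgEquiv.toLinearMap_apply, AlgHom.toLinearMap_apply]
  simpa using C

end Clean

end HopfGCoalgebra

namespace HopfGCoalgebra

set_option synthInstance.maxHeartbeats 400000
set_option maxHeartbeats 1000000

section Star

open TensorProduct

variable {k G : Type} [Field k] [Group G] {H : G → Type}
  [∀ γ : G, Ring (H γ)] [∀ γ : G, Algebra k (H γ)]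

variable (D : HopfGCoalgebra k G H)

/-- `u ↦ μ₁(x u) • 1`. -/
noncomputable def VV (μ : ∀ γ : G, H γ →ₗ[k] k) (x : H 1) (α : G) : H 1 →ₗ[k] H α⁻¹ :=
  (Algebra.linearMap k (H α⁻¹)) ∘ₗ (μ 1) ∘ₗ (LinearMap.mulLeft k x)

theorem VV_apply (μ : ∀ γ : G, H γ →ₗ[k] k) (x : H 1) (α : G) (u : H 1) :
    VV (H := H) μ x α u = μ 1 (x * u) • 1 := by
  simp [VV, Algebra.algebraMap_eq_smul_one]

theorem star (μ : ∀ γ : G, H γ →ₗ[k] k) (hμ : D.IsRightIntegral μ) (α : G) (x : H 1) (y : H α) :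
    (TensorProduct.lid k (H α⁻¹)) ((TensorProduct.map (μ α) LinearMap.id)
        (D.D1 α x * (y ⊗ₜ[k] (1 : H α⁻¹))))
      = (LinearMap.mul' k (H α⁻¹)) ((TensorProduct.map (VV μ x α) (D.S α)) (D.DL α y)) := by
  -- Way 1 : the inner expression collapses to `y ⊗ 1`.
  have hW1 : (TensorProduct.map LinearMap.id (LinearMap.mul' k (H α⁻¹)))
      ((TensorProduct.map LinearMap.id (TensorProduct.map LinearMap.id (D.S α)))
        ((TensorProduct.map LinearMap.id (D.Dm α)) (D.DR α y))) = y ⊗ₜ[k] (1 : H α⁻¹) := by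
    rw [mapid_mapid, mapid_mapid]
    have hWeq : ((LinearMap.mul' k (H α⁻¹)) ∘ₗ
        (TensorProduct.map LinearMap.id (D.S α))) ∘ₗ D.Dm α
        = (Algebra.linearMap k (H α⁻¹)) ∘ₗ D.ε.toLinearMap := by
      apply LinearMap.ext; intro u
      simp only [LinearMap.coe_comp, Function.comp_apply, Algebra.linearMap_apply,
        AlgHom.toLinearMap_apply, Algebra.algebraMap_eq_smul_one]
      exact D.antiR α u
    rw [hWeq]
    have hme : ∀ t : H α ⊗[k] H 1, (TensorProduct.map LinearMap.id
          ((Algebra.linearMap k (H α⁻¹)) ∘ₗ D.ε.toLinearMap)) t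
        = ((TensorProduct.rid k (H α)) ((TensorProduct.map LinearMap.id D.ε.toLinearMap) t))
            ⊗ₜ[k] (1 : H α⁻¹) := by
      intro t; induction t using TensorProduct.induction_on with
      | zero => simp
      | tmul u v =>
          simp only [TensorProduct.map_tmul, LinearMap.id_coe, id_eq, LinearMap.coe_comp,
            Function.comp_apply, AlgHom.toLinearMap_apply, Algebra.linearMap_apply,
            Algebra.algebraMap_eq_smul_one, TensorProduct.rid_tmul, TensorProduct.tmul_smul,
            TensorProduct.smul_tmul']
      | add s t hs ht => simp [hs, ht, TensorProduct.add_tmul]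
    rw [hme, D.counit_DR]
  -- coassociativity
  have hco : (TensorProduct.map LinearMap.id (D.Dm α)) (D.DR α y)
      = (TensorProduct.assoc k (H α) (H α⁻¹) (H α))
          ((TensorProduct.map (D.D1 α) LinearMap.id) (D.DL α y)) := by
    rw [D.coA α y, LinearEquiv.apply_symm_apply]
  -- Way 2 : the key pointwise computation.
  have key : ∀ t : H 1 ⊗[k] H α,
      (TensorProduct.lid k (H α⁻¹)) ((TensorProduct.map (μ α) LinearMap.id)
        (D.D1 α x * ((TensorProduct.map LinearMap.id (LinearMap.mul' k (H α⁻¹)))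
          ((TensorProduct.map LinearMap.id (TensorProduct.map LinearMap.id (D.S α)))
            ((TensorProduct.assoc k (H α) (H α⁻¹) (H α))
              ((TensorProduct.map (D.D1 α) LinearMap.id) t))))))
      = (LinearMap.mul' k (H α⁻¹)) ((TensorProduct.map (VV μ x α) (D.S α)) t) := by
    intro t; induction t using TensorProduct.induction_on with
    | zero => simp
    | tmul u v =>
        have aux : ∀ s : H α ⊗[k] H α⁻¹,
            (TensorProduct.lid k (H α⁻¹)) ((TensorProduct.map (μ α) LinearMap.id)
              (D.D1 α x * ((TensorProduct.map LinearMap.id (LinearMap.mul' k (H α⁻¹)))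
                ((TensorProduct.map LinearMap.id (TensorProduct.map LinearMap.id (D.S α)))
                  ((TensorProduct.assoc k (H α) (H α⁻¹) (H α)) (s ⊗ₜ[k] v))))))
            = (TensorProduct.lid k (H α⁻¹)) ((TensorProduct.map (μ α) LinearMap.id)
                (D.D1 α x * s)) * (D.S α v) := by
          intro s; induction s using TensorProduct.induction_on with
          | zero => simp
          | tmul p q =>
              have aux2 : ∀ r : H α ⊗[k] H α⁻¹, ∀ w : H α⁻¹,
                  (TensorProduct.lid k (H α⁻¹)) ((TensorProduct.map (μ α) LinearMap.id)
                    (r * (p ⊗ₜ[k] (q * w))))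
                  = (TensorProduct.lid k (H α⁻¹)) ((TensorProduct.map (μ α) LinearMap.id)
                      (r * (p ⊗ₜ[k] q))) * w := by
                intro r w; induction r using TensorProduct.induction_on with
                | zero => simp
                | tmul r1 r2 =>
                    simp [Algebra.TensorProduct.tmul_mul_tmul, mul_assoc, smul_mul_assoc]
                | add r r' hr hr' => simp [add_mul, hr, hr']
              simp only [TensorProduct.assoc_tmul, TensorProduct.map_tmul, LinearMap.id_coe,
                id_eq, LinearMap.mul'_apply]
              exact aux2 (D.D1 α x) (D.S α v)
          | add s s' hs hs' =>
              simp only [TensorProduct.add_tmul, map_add, mul_add, add_mul, hs, hs']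
        have hres : (TensorProduct.lid k (H α⁻¹)) ((TensorProduct.map (μ α) LinearMap.id)
            (D.D1 α x * D.D1 α u)) = μ 1 (x * u) • (1 : H α⁻¹) := by
          rw [← D.D1_mul, D.integral_D1 hμ]
        simp only [TensorProduct.map_tmul, LinearMap.id_coe, id_eq]
        rw [aux (D.D1 α u), hres]
        simp [VV_apply, smul_mul_assoc]
    | add t t' ht ht' => simp only [map_add, mul_add] at *; rw [ht, ht']
  have := key (D.DL α y)
  rw [← hco, hW1] at this
  exact this

end Star

end HopfGCoalgebra

namespace HopfGCoalgebra

set_option synthInstance.maxHeartbeats 400000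
set_option maxHeartbeats 1000000

section Main

open TensorProduct Module

variable {k G : Type} [Field k] [Group G] {H : G → Type}
  [∀ γ : G, Ring (H γ)] [∀ γ : G, Algebra k (H γ)]

theorem map_zero_left {R : Type} [CommSemiring R] {M N P Q : Type} [AddCommMonoid M]
    [AddCommMonoid N] [AddCommMonoid P] [AddCommMonoid Q] [Module R M] [Module R N]
    [Module R P] [Module R Q] (f : N →ₗ[R] Q) (t : M ⊗[R] N) :
    TensorProduct.map (0 : M →ₗ[R] P) f t = 0 := by
  induction t using TensorProduct.induction_on with
  | zero => simp
  | tmul u v => simp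
  | add s t hs ht => simp [hs, ht]

theorem map_zero_right {R : Type} [CommSemiring R] {M N P Q : Type} [AddCommMonoid M]
    [AddCommMonoid N] [AddCommMonoid P] [AddCommMonoid Q] [Module R M] [Module R N]
    [Module R P] [Module R Q] (f : M →ₗ[R] P) (t : M ⊗[R] N) :
    TensorProduct.map f (0 : N →ₗ[R] Q) t = 0 := by
  induction t using TensorProduct.induction_on with
  | zero => simp
  | tmul u v => simp
  | add s t hs ht => simp [hs, ht]

variable (D : HopfGCoalgebra k G H)

theorem mu_all_zero {μ : ∀ γ : G, H γ →ₗ[k] k} {a : ∀ γ : G, (H γ)ˣ}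
    (ha : D.IsComodulus μ a) (h0 : μ 1 = 0) (γ : G) (x : H γ) : μ γ x = 0 := by
  have h := ha.rel γ 1 (castAlg k (mul_one γ).symm x)
  rw [mu_cast μ (mul_one γ).symm, h0, map_zero_right, map_zero] at h
  rcases smul_eq_zero.mp h.symm with h1 | h2
  · exact h1
  · have h1 : (1 : H γ) = 0 := by
      have hu := (a γ).mul_inv
      rw [show ((a γ : H γ)) = 0 from h2, zero_mul] at hu
      exact hu.symm
    have hx : x = 0 := by rw [← mul_one x, h1, mul_zero]
    rw [hx, map_zero]

/-- Existence of the "Frobenius" element `Λ` with `μ₁(Λ u) = ε u`, when `μ₁ ≠ 0`. -/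
theorem exists_lambda [∀ γ : G, FiniteDimensional k (H γ)]
    {μ : ∀ γ : G, H γ →ₗ[k] k} (hμ : D.IsRightIntegral μ) (hne : μ 1 ≠ 0) :
    ∃ Λ : H 1, ∀ u : H 1, μ 1 (Λ * u) = D.ε u := by
  classical
  set Φ : H 1 →ₗ[k] Module.Dual k (H 1) := (LinearMap.mul k (H 1)).compr₂ (μ 1) with hΦdef
  have Φ_apply : ∀ h u : H 1, Φ h u = μ 1 (h * u) := by
    intro h u; simp [hΦdef, LinearMap.compr₂_apply, LinearMap.mul_apply']
  -- the "right leg" antipode map on `H 1⁻¹`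
  set S' : H (1 : G)⁻¹ →ₗ[k] H 1 :=
    (castAlg k (inv_inv (1 : G))).toLinearMap ∘ₗ D.S (1 : G)⁻¹ with hS'def
  have anti1 : ∀ h : H 1,
      (LinearMap.mul' k (H 1)) ((TensorProduct.map LinearMap.id S') (D.D1 1 h))
        = D.ε h • 1 := by
    intro h
    have A := D.antipode_right 1 (castAlg k (mul_inv_cancel (1 : G)).symm h)
    rw [castAlg_castAlg, castAlg_rfl_apply] at A
    simpa [D1, hS'def] using A
  -- if `Φ h = 0` then the first legs of `Δ(h)` are all killed by `Φ`
  have hKmap : ∀ h : H 1, Φ h = 0 →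
      (TensorProduct.map Φ (LinearMap.id : H (1:G)⁻¹ →ₗ[k] H (1:G)⁻¹)) (D.D1 1 h) = 0 := by
    intro h hh
    have dth : ∀ (t : H 1 ⊗[k] H (1:G)⁻¹) (y : H 1),
        dualTensorHom k (H 1) (H (1:G)⁻¹) ((TensorProduct.map Φ LinearMap.id) t) y
          = (TensorProduct.lid k (H (1:G)⁻¹)) ((TensorProduct.map (μ 1) LinearMap.id)
              (t * (y ⊗ₜ[k] (1 : H (1:G)⁻¹)))) := by
      intro t y
      induction t using TensorProduct.induction_on with
      | zero => simp
      | tmul c b => simp [Algebra.TensorProduct.tmul_mul_tmul, Φ_apply]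
      | add s t hs ht => simp [add_mul, hs, ht]
    have hz : dualTensorHom k (H 1) (H (1:G)⁻¹)
        ((TensorProduct.map Φ LinearMap.id) (D.D1 1 h)) = 0 := by
      apply LinearMap.ext; intro y
      rw [dth, D.star μ hμ 1 h y]
      have hVz : VV (H := H) μ h 1 = 0 := by
        apply LinearMap.ext; intro u
        rw [VV_apply]
        have : μ 1 (h * u) = 0 := by rw [← Φ_apply h u, hh]; rfl
        simp [this]
      rw [hVz, map_zero_left]
      simp
    have hb := Module.Free.chooseBasis k (H 1)
    calc (TensorProduct.map Φ LinearMap.id) (D.D1 1 h)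
        = (dualTensorHomEquivOfBasis (N := H (1:G)⁻¹) hb).symm
            (dualTensorHom k (H 1) (H (1:G)⁻¹)
              ((TensorProduct.map Φ LinearMap.id) (D.D1 1 h))) :=
          (dualTensorHomEquivOfBasis_symm_cancel_left _ _).symm
      _ = 0 := by rw [hz, map_zero]
  -- `Φ h = 0` implies `ε h = 0`
  have hεK : ∀ h : H 1, Φ h = 0 → D.ε h = 0 := by
    intro h hh
    obtain ⟨x₀, hx₀⟩ : ∃ x₀, μ 1 x₀ ≠ 0 := by
      by_contra hc; push_neg at hc; exact hne (LinearMap.ext hc)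
    have Gx_eq : ∀ t : H 1 ⊗[k] H (1:G)⁻¹,
        μ 1 ((LinearMap.mul' k (H 1)) ((TensorProduct.map LinearMap.id S') t) * x₀)
          = (TensorProduct.lift (LinearMap.lcomp k k ((LinearMap.mulRight k x₀) ∘ₗ S')))
              ((TensorProduct.map Φ LinearMap.id) t) := by
      intro t
      induction t using TensorProduct.induction_on with
      | zero => simp
      | tmul c b => simp [Φ_apply, mul_assoc]
      | add s t hs ht => simp [add_mul, hs, ht]
    have h2 : μ 1 ((D.ε h • (1 : H 1)) * x₀) = 0 := by
      rw [← anti1 h, Gx_eq, hKmap h hh, map_zero]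
    rw [smul_mul_assoc, one_mul, map_smul, smul_eq_mul] at h2
    exact (mul_eq_zero.mp h2).resolve_right hx₀
  -- `Φ` is injective
  have hker : LinearMap.ker Φ ≤ LinearMap.ker D.ε.toLinearMap := by
    intro h hh
    simp only [LinearMap.mem_ker] at hh ⊢
    exact hεK h hh
  have hinj : Function.Injective Φ := by
    have hz : ∀ h : H 1, Φ h = 0 → h = 0 := by
      intro h hh
      -- factor ε through Φ
      obtain ⟨g, hg⟩ := LinearMap.exists_extend
        ((Submodule.liftQ (LinearMap.ker Φ) D.ε.toLinearMap hker) ∘ₗ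
          (LinearMap.quotKerEquivRange Φ).symm.toLinearMap)
      have hfac : ∀ u : H 1, g (Φ u) = D.ε u := by
        intro u
        have h1 : Φ u = (LinearMap.range Φ).subtype
            ⟨Φ u, LinearMap.mem_range_self Φ u⟩ := rfl
        rw [h1, ← LinearMap.comp_apply, hg]
        have h2 : (LinearMap.quotKerEquivRange Φ)
            (Submodule.Quotient.mk u) = ⟨Φ u, LinearMap.mem_range_self Φ u⟩ :=
          Subtype.ext (LinearMap.quotKerEquivRange_apply_mk Φ u)
        have h3 : (LinearMap.quotKerEquivRange Φ).symm
            ⟨Φ u, LinearMap.mem_range_self Φ u⟩ = Submodule.Quotient.mk u := by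
          rw [← h2, LinearEquiv.symm_apply_apply]
        simp only [LinearMap.comp_apply, LinearEquiv.coe_toLinearMap, h3]
        exact Submodule.liftQ_apply _ _ _
      have hεmap : (TensorProduct.map D.ε.toLinearMap
          (LinearMap.id : H (1:G)⁻¹ →ₗ[k] H (1:G)⁻¹)) (D.D1 1 h) = 0 := by
        have heq : D.ε.toLinearMap = g ∘ₗ Φ := LinearMap.ext fun u => (hfac u).symm
        rw [heq, ← mapmap_id g Φ, hKmap h hh, map_zero]
      have hcl := D.counit_left (1 : G)⁻¹ (castAlg k (mul_inv_cancel (1 : G)).symm h)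
      rw [castAlg_castAlg] at hcl
      have hcl' : (TensorProduct.lid k (H (1:G)⁻¹)) ((TensorProduct.map D.ε.toLinearMap
          LinearMap.id) (D.D1 1 h)) = castAlg k (((mul_inv_cancel (1:G)).symm).trans
            (one_mul (1:G)⁻¹)) h := by
        simpa [D1] using hcl
      have hz0 : castAlg k (((mul_inv_cancel (1:G)).symm).trans (one_mul (1:G)⁻¹)) h = 0 := by
        rw [← hcl', hεmap, map_zero]
      exact castAlg_injective _ (by rw [hz0, map_zero] :
        castAlg k (((mul_inv_cancel (1:G)).symm).trans (one_mul (1:G)⁻¹)) h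
          = castAlg k (((mul_inv_cancel (1:G)).symm).trans (one_mul (1:G)⁻¹)) 0)
    intro u v huv
    have : u - v = 0 := hz _ (by rw [map_sub, huv, sub_self])
    exact sub_eq_zero.mp this
  have hsurj : Function.Surjective Φ := by
    have hfr : Module.finrank k (H 1) = Module.finrank k (Module.Dual k (H 1)) :=
      (Subspace.dual_finrank_eq).symm
    exact (LinearMap.injective_iff_surjective_of_finrank_eq_finrank hfr).mp hinj
  obtain ⟨Λ, hΛ⟩ := hsurj D.ε.toLinearMap
  refine ⟨Λ, fun u => ?_⟩
  rw [← Φ_apply, hΛ]; rfl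

end Main

end HopfGCoalgebra


open HopfGCoalgebra in
/-- For a finite type Hopf `G`-coalgebra with bijective antipode, right `G`-integral `μ` and
`G`-comodulus `a`, one has `μ_{α⁻¹}(S_α(x)) = μ_α(a_α x)`. -/
theorem integral_comp_antipode_eq_comodulus_mul
    {k G : Type} [Field k] [Group G] {H : G → Type}
    [∀ γ : G, Ring (H γ)] [∀ γ : G, Algebra k (H γ)] [∀ γ : G, FiniteDimensional k (H γ)]
    (D : HopfGCoalgebra k G H) (hS : ∀ γ : G, Function.Bijective (D.S γ))
    (μ : ∀ γ : G, H γ →ₗ[k] k) (hμ : D.IsRightIntegral μ)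
    (a : ∀ γ : G, (H γ)ˣ) (ha : D.IsComodulus μ a) :
    ∀ (α : G) (x : H α), μ α⁻¹ (D.S α x) = μ α ((a α : H α) * x) := by
  intro α y
  by_cases h0 : μ 1 = 0
  · rw [D.mu_all_zero ha h0 α⁻¹ (D.S α y), D.mu_all_zero ha h0 α ((a α : H α) * y)]
  · obtain ⟨Λ, hΛ⟩ := D.exists_lambda hμ h0
    have hstar := D.star μ hμ α Λ y
    -- the right-hand side of `star` is `S α y`
    have hVV : VV (H := H) μ Λ α = (Algebra.linearMap k (H α⁻¹)) ∘ₗ D.ε.toLinearMap := by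
      apply LinearMap.ext; intro u
      rw [VV_apply, hΛ u]
      simp [Algebra.algebraMap_eq_smul_one]
    have hSy : (LinearMap.mul' k (H α⁻¹))
        ((TensorProduct.map (VV (H := H) μ Λ α) (D.S α)) (D.DL α y)) = D.S α y := by
      rw [hVV]
      have hpt : ∀ t : H 1 ⊗[k] H α,
          (LinearMap.mul' k (H α⁻¹)) ((TensorProduct.map
            ((Algebra.linearMap k (H α⁻¹)) ∘ₗ D.ε.toLinearMap) (D.S α)) t)
          = D.S α ((TensorProduct.lid k (H α))
              ((TensorProduct.map D.ε.toLinearMap LinearMap.id) t)) := by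
        intro t
        induction t using TensorProduct.induction_on with
        | zero => simp
        | tmul u v => simp [Algebra.algebraMap_eq_smul_one, smul_mul_assoc]
        | add s t hs ht => simp [hs, ht]
      rw [hpt, D.counit_DL]
    -- pairing with `μ α⁻¹`
    have pairing : ∀ t : H α ⊗[k] H α⁻¹,
        μ α⁻¹ ((TensorProduct.lid k (H α⁻¹)) ((TensorProduct.map (μ α) LinearMap.id)
          (t * (y ⊗ₜ[k] (1 : H α⁻¹)))))
        = μ α (((TensorProduct.rid k (H α)) ((TensorProduct.map LinearMap.id (μ α⁻¹)) t)) * y) := by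
      intro t
      induction t using TensorProduct.induction_on with
      | zero => simp
      | tmul p q =>
          simp [Algebra.TensorProduct.tmul_mul_tmul, smul_mul_assoc, mul_comm]
      | add s t hs ht => simp [add_mul, hs, ht]
    have hμΛ : μ 1 Λ = 1 := by
      have := hΛ 1
      rw [mul_one, map_one] at this
      exact this
    calc μ α⁻¹ (D.S α y)
        = μ α⁻¹ ((TensorProduct.lid k (H α⁻¹)) ((TensorProduct.map (μ α) LinearMap.id)
            (D.D1 α Λ * (y ⊗ₜ[k] (1 : H α⁻¹))))) := by rw [hstar, hSy]
      _ = μ α (((TensorProduct.rid k (H α))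
            ((TensorProduct.map LinearMap.id (μ α⁻¹)) (D.D1 α Λ))) * y) := pairing (D.D1 α Λ)
      _ = μ α ((a α : H α) * y) := by
          rw [D.comodulus_D1 ha α Λ, hμΛ, one_smul]
end
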